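/- Let β ∈ [0,1), let k be a positive integer, and set c := 1/k² − β·k²; assume c > 0. Let ψ : ℝ → ℝ be continuous, 2π-periodic, even, with zero mean, and suppose that for every nonzero integer j the Fourier coefficient ψ̂(j) := (1/(2π))∫_{−π}^{π} ψ(x)·e^{−ijx} dx satisfies (1 − 1/(c·j² + β·j⁴))·ψ̂(j) = 0. Then there exists A ∈ ℝ such that ψ(x) = A·cos(kx) for all x ∈ ℝ. -/

import Mathlib

open Real

/-- One-dimensionality of the kernel of the linearization
`−Id + (cD² + βD⁴)⁻¹` at the bifurcation speed `c = 1/k² − βk²`: any continuous,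
even, zero-mean, 2π-periodic `ψ` whose nonzero Fourier coefficients are killed by the
symbol is a multiple of `cos(k·)`. -/
theorem kernel_one_dimensional (β : ℝ) (hβ0 : 0 ≤ β) (hβ1 : β < 1) (k : ℕ) (hk : 0 < k)
    (hc : 0 < 1 / (k : ℝ) ^ 2 - β * (k : ℝ) ^ 2)
    (ψ : ℝ → ℝ) (hψc : Continuous ψ) (hψp : Function.Periodic ψ (2 * π))
    (hψe : ∀ x, ψ (-x) = ψ x) (hψ0 : (∫ y in (-π)..π, ψ y) = 0)
    (hker : ∀ j : ℤ, j ≠ 0 →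
      ((1 : ℂ) -
          ((1 / ((1 / (k : ℝ) ^ 2 - β * (k : ℝ) ^ 2) * (j : ℝ) ^ 2 + β * (j : ℝ) ^ 4) : ℝ) : ℂ)) *
        (((1 / (2 * π) : ℝ) : ℂ) *
          ∫ x in (-π)..π, (ψ x : ℂ) * Complex.exp (-Complex.I * (j : ℂ) * (x : ℂ))) = 0) :
    ∃ A : ℝ, ∀ x, ψ x = A * Real.cos ((k : ℝ) * x) := by
  haveI : Fact (0 < 2 * π) := ⟨by positivity⟩
  have hkR : (0 : ℝ) < k := by exact_mod_cast hk
  have hk2 : ((k : ℝ)) ^ 2 ≠ 0 := by positivity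
  set cr : ℝ := 1 / (k : ℝ) ^ 2 - β * (k : ℝ) ^ 2 with hcr
  -- the symbol vanishes exactly at j = ±k
  have hck : cr * (k : ℝ) ^ 2 + β * (k : ℝ) ^ 4 = 1 := by
    rw [hcr]; field_simp; ring
  have hsym : ∀ j : ℤ, j ≠ (k : ℤ) → j ≠ -(k : ℤ) → j ≠ 0 →
      (1 : ℝ) - 1 / (cr * (j : ℝ) ^ 2 + β * (j : ℝ) ^ 4) ≠ 0 := by
    intro j hj1 hj2 hj0
    set d : ℝ := cr * (j : ℝ) ^ 2 + β * (j : ℝ) ^ 4 with hd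
    have hjR : ((j : ℝ)) ≠ 0 := by exact_mod_cast hj0
    have hj2pos : (0 : ℝ) < (j : ℝ) ^ 2 := by positivity
    have hdpos : 0 < d := by
      rw [hd]
      have h1 : 0 < cr * (j : ℝ) ^ 2 := mul_pos hc hj2pos
      nlinarith [sq_nonneg ((j : ℝ) ^ 2), mul_nonneg hβ0 (sq_nonneg ((j:ℝ)^2))]
    have hsq : ((j : ℝ)) ^ 2 ≠ (k : ℝ) ^ 2 := by
      intro h
      rcases sq_eq_sq_iff_eq_or_eq_neg.mp h with h' | h'
      · exact hj1 (by exact_mod_cast h')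
      · exact hj2 (by exact_mod_cast h')
    have hd1 : d ≠ 1 := by
      intro h
      have hfac : d - 1 = ((j : ℝ) ^ 2 - (k : ℝ) ^ 2) * (cr + β * ((j : ℝ) ^ 2 + (k : ℝ) ^ 2)) := by
        rw [hd, ← hck]; ring
      have hpos : 0 < cr + β * ((j : ℝ) ^ 2 + (k : ℝ) ^ 2) := by
        have : 0 ≤ β * ((j : ℝ) ^ 2 + (k : ℝ) ^ 2) := by positivity
        linarith
      have : ((j : ℝ) ^ 2 - (k : ℝ) ^ 2) * (cr + β * ((j : ℝ) ^ 2 + (k : ℝ) ^ 2)) = 0 := by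
        rw [← hfac, h]; ring
      rcases mul_eq_zero.mp this with h' | h'
      · exact hsq (by linarith)
      · linarith
    intro h
    have : 1 / d = 1 := by linarith
    have : d = 1 := by
      field_simp at this
      linarith
    exact hd1 this
  -- lift ψ to the circle
  set Ψ : ℝ → ℂ := fun x => (ψ x : ℂ) with hΨ
  have hΨp : Function.Periodic Ψ (2 * π) := fun x => by simp [hΨ, hψp x]
  let F : C(AddCircle (2 * π), ℂ) :=
    ⟨hΨp.lift, continuous_coinduced_dom.mpr (by exact Complex.continuous_ofReal.comp hψc)⟩
  have hF : ∀ n : ℤ, fourierCoeff (⇑F) n =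
      ((1 / (2 * π) : ℝ) : ℂ) *
        ∫ x in (-π)..π, (ψ x : ℂ) * Complex.exp (-Complex.I * (n : ℂ) * (x : ℂ)) := by
    intro n
    rw [fourierCoeff_eq_intervalIntegral (⇑F) n (-π)]
    rw [show -π + 2 * π = π by ring]
    rw [Complex.real_smul]
    congr 1
    apply intervalIntegral.integral_congr
    intro x hx
    show fourier (-n) (x : AddCircle (2 * π)) * F (x : AddCircle (2 * π)) = _
    have hFx : F (x : AddCircle (2 * π)) = Ψ x := hΨp.lift_coe x
    rw [hFx, fourier_coe_apply, mul_comm]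
    congr 1
    have h2π : (2 : ℂ) * (π : ℂ) ≠ 0 := by
      simp [Real.pi_ne_zero, Complex.ofReal_ne_zero]
    push_cast
    congr 1
    rw [div_eq_iff h2π]
    ring
  -- all Fourier coefficients vanish except at ±k
  have hcoeff0 : ∀ j : ℤ, j ≠ (k : ℤ) → j ≠ -(k : ℤ) → fourierCoeff (⇑F) j = 0 := by
    intro j hj1 hj2
    by_cases hj0 : j = 0
    · subst hj0
      rw [hF 0]
      simp only [Int.cast_zero, mul_zero, zero_mul, Complex.exp_zero, mul_one]
      have : (∫ x in (-π)..π, (ψ x : ℂ)) = ((∫ y in (-π)..π, ψ y : ℝ) : ℂ) := by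
        rw [intervalIntegral.integral_ofReal]
      rw [this, hψ0]
      simp
    · have hs := hsym j hj1 hj2 hj0
      have hkj := hker j hj0
      have hcast : ((1 : ℂ) -
          ((1 / (cr * (j : ℝ) ^ 2 + β * (j : ℝ) ^ 4) : ℝ) : ℂ)) ≠ 0 := by
        rw [← Complex.ofReal_one, ← Complex.ofReal_sub]
        exact Complex.ofReal_ne_zero.mpr hs
      rw [hF j]
      rcases mul_eq_zero.mp hkj with h | h
      · exact absurd h hcast
      · exact h
  -- the two possibly nonzero coefficients
  set a : ℂ := fourierCoeff (⇑F) (k : ℤ) with ha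
  set b : ℂ := fourierCoeff (⇑F) (-(k : ℤ)) with hb
  have hkne : (k : ℤ) ≠ -(k : ℤ) := by
    intro h
    have : (2 : ℤ) * k = 0 := by linarith [h]
    simp at this
    omega
  have hsupport : ∀ j : ℤ, j ∉ ({(k : ℤ), -(k : ℤ)} : Finset ℤ) → fourierCoeff (⇑F) j = 0 := by
    intro j hj
    simp only [Finset.mem_insert, Finset.mem_singleton] at hj
    push_neg at hj
    exact hcoeff0 j hj.1 hj.2
  have hsummable : Summable (fourierCoeff (⇑F)) :=
    summable_of_ne_finset_zero hsupport
  -- pointwise Fourier inversion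
  have hE : ∀ x : ℝ, (ψ x : ℂ) =
      a * Complex.exp (Complex.I * (k : ℂ) * (x : ℂ)) +
      b * Complex.exp (-(Complex.I * (k : ℂ) * (x : ℂ))) := by
    intro x
    have h1 := has_pointwise_sum_fourier_series_of_summable hsummable (x : AddCircle (2 * π))
    have h2 : HasSum (fun i : ℤ => fourierCoeff (⇑F) i • fourier i (x : AddCircle (2 * π)))
        (∑ j ∈ ({(k : ℤ), -(k : ℤ)} : Finset ℤ),
          fourierCoeff (⇑F) j • fourier j (x : AddCircle (2 * π))) := by
      apply hasSum_sum_of_ne_finset_zero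
      intro j hj
      rw [hsupport j hj, zero_smul]
    have h3 := h1.unique h2
    have hFx : F (x : AddCircle (2 * π)) = Ψ x := hΨp.lift_coe x
    rw [hFx] at h3
    rw [Finset.sum_pair hkne] at h3
    have hfk : fourier ((k : ℤ)) ((x : ℝ) : AddCircle (2 * π)) =
        Complex.exp (Complex.I * (k : ℂ) * (x : ℂ)) := by
      rw [fourier_coe_apply]
      congr 1
      have h2π : (2 : ℂ) * (π : ℂ) ≠ 0 := by
        simp [Real.pi_ne_zero, Complex.ofReal_ne_zero]
      push_cast
      rw [div_eq_iff h2π]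
      ring
    have hfk' : fourier (-(k : ℤ)) ((x : ℝ) : AddCircle (2 * π)) =
        Complex.exp (-(Complex.I * (k : ℂ) * (x : ℂ))) := by
      rw [fourier_coe_apply]
      congr 1
      have h2π : (2 : ℂ) * (π : ℂ) ≠ 0 := by
        simp [Real.pi_ne_zero, Complex.ofReal_ne_zero]
      push_cast
      rw [div_eq_iff h2π]
      ring
    rw [hfk, hfk'] at h3
    simpa [smul_eq_mul, ha, hb] using h3
  -- use evenness to get a = b
  set x₀ : ℝ := π / (2 * k) with hx₀
  have hkx₀ : (k : ℝ) * x₀ = π / 2 := by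
    rw [hx₀]; field_simp
  have hexp : Complex.exp (Complex.I * (k : ℂ) * (x₀ : ℂ)) = Complex.I := by
    have harg : Complex.I * (k : ℂ) * (x₀ : ℂ) = ((π / 2 : ℝ) : ℂ) * Complex.I := by
      rw [← hkx₀]; push_cast; ring
    rw [harg, Complex.exp_mul_I]
    rw [← Complex.ofReal_cos, ← Complex.ofReal_sin]
    simp [Real.cos_pi_div_two, Real.sin_pi_div_two]
  have hexp' : Complex.exp (-(Complex.I * (k : ℂ) * (x₀ : ℂ))) = -Complex.I := by
    rw [Complex.exp_neg, hexp]
    simp [Complex.inv_I]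
  have heq1 := hE x₀
  have heq2 := hE (-x₀)
  rw [hψe x₀] at heq2
  have hargneg : Complex.I * (k : ℂ) * ((-x₀ : ℝ) : ℂ) = -(Complex.I * (k : ℂ) * (x₀ : ℂ)) := by
    push_cast; ring
  rw [hargneg, neg_neg, hexp, hexp'] at heq2
  rw [hexp, hexp'] at heq1
  -- heq1 : ψ x₀ = a * I + b * (-I), heq2 : ψ x₀ = a * (-I) + b * I
  have hab : a = b := by
    have h := heq1.symm.trans heq2
    have hI : Complex.I ≠ 0 := Complex.I_ne_zero
    have h2 : (a - b) * (2 * Complex.I) = 0 := by linear_combination h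
    rcases mul_eq_zero.mp h2 with h' | h'
    · exact sub_eq_zero.mp h'
    · simp [Complex.I_ne_zero] at h'
  -- conclude
  refine ⟨2 * a.re, fun x => ?_⟩
  have h := hE x
  rw [← hab] at h
  have hcos : Complex.exp (Complex.I * (k : ℂ) * (x : ℂ)) +
      Complex.exp (-(Complex.I * (k : ℂ) * (x : ℂ))) =
      2 * ((Real.cos ((k : ℝ) * x) : ℝ) : ℂ) := by
    have harg : Complex.I * (k : ℂ) * (x : ℂ) = (((k : ℝ) * x : ℝ) : ℂ) * Complex.I := by
      push_cast; ring
    rw [harg, ← neg_mul, Complex.exp_mul_I, Complex.exp_mul_I, Complex.cos_neg, Complex.sin_neg,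
      Complex.ofReal_cos]
    ring
  have h2 : (ψ x : ℂ) = a * (2 * ((Real.cos ((k : ℝ) * x) : ℝ) : ℂ)) := by
    rw [h, ← hcos]; ring
  have h3 := congrArg Complex.re h2
  simp only [Complex.ofReal_re, Complex.mul_re, Complex.mul_im, Complex.ofReal_im,
    Complex.re_ofNat, Complex.im_ofNat, mul_zero, zero_mul, sub_zero, add_zero, zero_add] at h3
  rw [h3]; ring
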